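/- Let M be a finitely generated multiplication R-module. If N is a 2-absorbing primary submodule of M, then M-rad(N) is a 2-absorbing submodule of M. -/

import Mathlib

open Submodule Polynomial

variable {R : Type*} [CommRing R] {M : Type*} [AddCommGroup M] [Module R M]

/-- A prime submodule: proper, and `a • m ∈ P` implies `m ∈ P` or `a • ⊤ ≤ P`. -/
def IsPrimeSubmodule (P : Submodule R M) : Prop :=
  P ≠ ⊤ ∧ ∀ (a : R) (m : M), a • m ∈ P → m ∈ P ∨ a ∈ P.colon ⊤

/-- The `M`-radical of `N`: intersection of prime submodules containing `N`
(equal to `⊤` when there are none). -/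
def mRad (N : Submodule R M) : Submodule R M :=
  sInf {P : Submodule R M | IsPrimeSubmodule P ∧ N ≤ P}

/-- 2-absorbing primary submodule. -/
def Is2AbsorbingPrimary (N : Submodule R M) : Prop :=
  N ≠ ⊤ ∧ ∀ (a b : R) (m : M), (a * b) • m ∈ N →
    a • m ∈ mRad N ∨ b • m ∈ mRad N ∨ a * b ∈ N.colon ⊤

/-- Multiplication module: every submodule is `I • ⊤` for some ideal `I`. -/
def IsMultiplicationModule (R M : Type*) [CommRing R] [AddCommGroup M] [Module R M] : Prop :=
  ∀ N : Submodule R M, ∃ I : Ideal R, N = I • (⊤ : Submodule R M)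

/-- Primary submodule. -/
def IsPrimarySubmodule (P : Submodule R M) : Prop :=
  P ≠ ⊤ ∧ ∀ (a : R) (m : M), a • m ∈ P → m ∈ P ∨ a ∈ (P.colon ⊤).radical

/-- 2-absorbing primary ideal. -/
def Is2AbsorbingPrimaryIdeal {R : Type*} [CommRing R] (I : Ideal R) : Prop :=
  I ≠ ⊤ ∧ ∀ a b c : R, a * b * c ∈ I → a * b ∈ I ∨ a * c ∈ I.radical ∨ b * c ∈ I.radical

/-- 2-absorbing submodule. -/
def Is2AbsorbingSubmodule (K : Submodule R M) : Prop :=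
  K ≠ ⊤ ∧ ∀ (a b : R) (m : M), (a * b) • m ∈ K →
    a * b ∈ K.colon ⊤ ∨ a • m ∈ K ∨ b • m ∈ K

theorem colon_smul_top_le [Module.Finite R M] (p : Ideal R) (hp : p.IsPrime)
    (hann : ∀ r : R, (∀ x : M, r • x = 0) → r ∈ p)
    {r : R} (hr : r ∈ (p • ⊤ : Submodule R M).colon ⊤) : r ∈ p := by
  have hrange : LinearMap.range (LinearMap.lsmul R M r) ≤ p • (⊤ : Submodule R M) := by
    rintro x ⟨y, rfl⟩
    exact Submodule.mem_colon.1 hr y trivial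
  obtain ⟨q, hmonic, -, hcoeff, haeval⟩ :=
    LinearMap.exists_monic_and_coeff_mem_pow_and_aeval_eq_zero_of_range_le_smul R
      (LinearMap.lsmul R M r) p hrange
  have heval : q.eval r ∈ p := by
    apply hann
    intro x
    have h2 : Polynomial.aeval (LinearMap.lsmul R M r) q = LinearMap.lsmul R M (q.eval r) := by
      have h3 : LinearMap.lsmul R M r = algebraMap R (Module.End R M) r := rfl
      rw [h3, Polynomial.aeval_algebraMap_apply_eq_algebraMap_eval]
      rfl
    have h4 : Polynomial.aeval (LinearMap.lsmul R M r) q x = 0 := by rw [haeval]; rfl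
    rw [h2] at h4
    exact h4
  have hsum : q.eval r = (∑ i ∈ Finset.range q.natDegree, q.coeff i * r ^ i) + r ^ q.natDegree := by
    rw [Polynomial.eval_eq_sum_range, Finset.sum_range_succ, hmonic.coeff_natDegree, one_mul]
  have hpow : r ^ q.natDegree ∈ p := by
    have hterms : (∑ i ∈ Finset.range q.natDegree, q.coeff i * r ^ i) ∈ p := by
      refine Ideal.sum_mem _ fun i hi => Ideal.mul_mem_right _ _ ?_
      exact Ideal.pow_le_self (Nat.sub_ne_zero_of_lt (Finset.mem_range.1 hi)) (hcoeff i)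
    have := Ideal.sub_mem p heval hterms
    rwa [hsum, add_sub_cancel_left] at this
  exact hp.mem_of_pow_mem _ hpow

theorem isPrimeSubmodule_smul_top [Module.Finite R M] (hM : IsMultiplicationModule R M)
    (p : Ideal R) (hp : p.IsPrime) (hann : ∀ r : R, (∀ x : M, r • x = 0) → r ∈ p)
    (hproper : (p • ⊤ : Submodule R M) ≠ ⊤) : IsPrimeSubmodule (p • ⊤ : Submodule R M) := by
  refine ⟨hproper, fun a m hm => ?_⟩
  obtain ⟨K, hK⟩ := hM (Submodule.span R {m})
  by_cases hKp : K ≤ p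
  · left
    have hmm : m ∈ Submodule.span R {m} := Submodule.mem_span_singleton_self m
    rw [hK] at hmm
    exact Submodule.smul_mono hKp le_rfl hmm
  · right
    obtain ⟨k, hkK, hkp⟩ := SetLike.not_le_iff_exists.1 hKp
    have hak : a * k ∈ p := by
      apply colon_smul_top_le p hp hann
      rw [Submodule.mem_colon]
      intro x _
      have hx : k • x ∈ Submodule.span R {m} := by
        rw [hK]; exact Submodule.smul_mem_smul hkK trivial
      obtain ⟨r, hr⟩ := Submodule.mem_span_singleton.1 hx
      have : a • (k • x) ∈ (p • ⊤ : Submodule R M) := by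
        rw [← hr, smul_comm]
        exact Submodule.smul_mem _ r hm
      rwa [smul_smul] at this
    have ha : a ∈ p := (hp.mem_or_mem hak).resolve_right hkp
    rw [Submodule.mem_colon]
    intro x _
    exact Submodule.smul_mem_smul ha trivial

theorem mRad_eq [Module.Finite R M] (hM : IsMultiplicationModule R M) (N : Submodule R M) :
    mRad N = (N.colon ⊤).radical • ⊤ := by
  have hann : ∀ r : R, (∀ x : M, r • x = 0) → r ∈ N.colon ⊤ := by
    intro r hr
    rw [Submodule.mem_colon]
    intro x _
    rw [hr x]; exact N.zero_mem
  apply le_antisymm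
  · intro m hm
    by_contra hmem
    obtain ⟨K, hK⟩ := hM (Submodule.span R {m})
    have hKrad : ¬ K ≤ (N.colon ⊤).radical := by
      intro h
      apply hmem
      have hmm : m ∈ Submodule.span R {m} := Submodule.mem_span_singleton_self m
      rw [hK] at hmm
      exact Submodule.smul_mono h le_rfl hmm
    rw [Ideal.radical_eq_sInf] at hKrad
    have : ∃ p ∈ {J : Ideal R | N.colon ⊤ ≤ J ∧ J.IsPrime}, ¬ K ≤ p := by
      by_contra hc
      push_neg at hc
      exact hKrad (le_sInf hc)
    obtain ⟨p, ⟨hple, hpprime⟩, hKnp⟩ := this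
    obtain ⟨k, hkK, hkp⟩ := SetLike.not_le_iff_exists.1 hKnp
    have hannp : ∀ r : R, (∀ x : M, r • x = 0) → r ∈ p := fun r hr => hple (hann r hr)
    have hmnp : m ∉ (p • ⊤ : Submodule R M) := by
      intro hmp
      apply hkp
      apply colon_smul_top_le p hpprime hannp
      rw [Submodule.mem_colon]
      intro x _
      have hx : k • x ∈ Submodule.span R {m} := by
        rw [hK]; exact Submodule.smul_mem_smul hkK trivial
      obtain ⟨r, hr⟩ := Submodule.mem_span_singleton.1 hx
      rw [← hr]
      exact Submodule.smul_mem _ r hmp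
    have hproper : (p • ⊤ : Submodule R M) ≠ ⊤ := by intro h; rw [h] at hmnp; exact hmnp Submodule.mem_top
    have hNle : N ≤ p • ⊤ := by
      obtain ⟨I₀, hI₀⟩ := hM N
      have hI₀le : I₀ ≤ p := by
        refine le_trans ?_ hple
        intro i hi
        rw [Submodule.mem_colon]
        intro x _
        rw [hI₀]
        exact Submodule.smul_mem_smul hi trivial
      rw [hI₀]
      exact Submodule.smul_mono hI₀le le_rfl
    exact hmnp (Submodule.mem_sInf.1 hm _ ⟨isPrimeSubmodule_smul_top hM p hpprime hannp hproper, hNle⟩)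
  · apply le_sInf
    rintro P ⟨hP, hNP⟩
    have hcolonP : (P.colon ⊤).IsPrime := by
      constructor
      · intro h
        apply hP.1
        rw [eq_top_iff]
        intro x _
        have : (1 : R) ∈ P.colon ⊤ := h ▸ trivial
        have := Submodule.mem_colon.1 this x trivial
        rwa [one_smul] at this
      · intro a b hab
        by_cases ha : a ∈ P.colon ⊤
        · exact Or.inl ha
        · right
          rw [Submodule.mem_colon]
          intro x _
          have habx := Submodule.mem_colon.1 hab x trivial
          rw [mul_smul] at habx
          exact (hP.2 a (b • x) habx).resolve_right ha
    have hle : (N.colon ⊤).radical ≤ P.colon ⊤ := by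
      rw [hcolonP.radical_le_iff]
      intro r hr
      rw [Submodule.mem_colon]
      exact fun x hx => hNP (Submodule.mem_colon.1 hr x hx)
    refine Submodule.smul_le.2 fun r hr x _ => ?_
    exact Submodule.mem_colon.1 (hle hr) x trivial

theorem colon_mRad [Module.Finite R M] (hM : IsMultiplicationModule R M) (N : Submodule R M) :
    (mRad N).colon ⊤ = (N.colon ⊤).radical := by
  rw [mRad_eq hM]
  apply le_antisymm
  · intro r hr
    rw [Ideal.radical_eq_sInf]
    apply Submodule.mem_sInf.2
    rintro p ⟨hple, hpprime⟩
    have hrad : (N.colon ⊤).radical ≤ p := hpprime.radical_le_iff.2 hple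
    apply colon_smul_top_le (M := M) p hpprime
    · intro s hs
      apply hple
      rw [Submodule.mem_colon]
      intro x _
      rw [hs x]; exact N.zero_mem
    · rw [Submodule.mem_colon]
      intro x hx
      exact Submodule.smul_mono hrad le_rfl (Submodule.mem_colon.1 hr x hx)
  · intro r hr
    rw [Submodule.mem_colon]
    intro x _
    exact Submodule.smul_mem_smul hr trivial

theorem colon_2abs [Module.Finite R M] (hM : IsMultiplicationModule R M) (N : Submodule R M)
    (hN : Is2AbsorbingPrimary N) : Is2AbsorbingPrimaryIdeal (N.colon ⊤) := by
  constructor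
  · intro h
    apply hN.1
    rw [eq_top_iff]
    intro x _
    have h1 : (1 : R) ∈ N.colon ⊤ := h ▸ Submodule.mem_top
    have := Submodule.mem_colon.1 h1 x trivial
    rwa [one_smul] at this
  · intro a b c habc
    by_contra hcon
    push_neg at hcon
    obtain ⟨hab, hac, hbc⟩ := hcon
    rw [← colon_mRad hM N] at hac hbc
    rw [Submodule.mem_colon] at hac hbc
    push_neg at hac hbc
    obtain ⟨x₁, -, hx₁⟩ := hac
    obtain ⟨x₂, -, hx₂⟩ := hbc
    have key : ∀ x : M, (a * b) • (c • x) ∈ N := by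
      intro x
      rw [smul_smul, mul_assoc]
      rw [← mul_assoc]
      exact Submodule.mem_colon.1 habc x trivial
    have h1 : (b * c) • x₁ ∈ mRad N := by
      rcases hN.2 a b (c • x₁) (key x₁) with h | h | h
      · rw [smul_smul] at h; exact absurd h hx₁
      · rwa [smul_smul] at h
      · exact absurd h hab
    have h2 : (a * c) • x₂ ∈ mRad N := by
      rcases hN.2 a b (c • x₂) (key x₂) with h | h | h
      · rwa [smul_smul] at h
      · rw [smul_smul] at h; exact absurd h hx₂
      · exact absurd h hab
    rcases hN.2 a b (c • (x₁ + x₂)) (key (x₁ + x₂)) with h | h | h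
    · rw [smul_smul, smul_add] at h
      have : (a * c) • x₁ ∈ mRad N := by
        have := Submodule.sub_mem _ h h2
        rwa [add_sub_cancel_right] at this
      exact hx₁ this
    · rw [smul_smul, smul_add] at h
      have : (b * c) • x₂ ∈ mRad N := by
        have := Submodule.sub_mem _ h h1
        rwa [add_sub_cancel_left] at this
      exact hx₂ this
    · exact hab h

theorem rad_2abs {R : Type*} [CommRing R] {I : Ideal R} (hI : Is2AbsorbingPrimaryIdeal I)
    {a b c : R} (h : a * b * c ∈ I.radical) :
    a * b ∈ I.radical ∨ a * c ∈ I.radical ∨ b * c ∈ I.radical := by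
  obtain ⟨n, hn⟩ := Ideal.mem_radical_iff.1 h
  have hpow : a ^ n * b ^ n * c ^ n ∈ I := by rw [← mul_pow, ← mul_pow]; exact hn
  rcases hI.2 _ _ _ hpow with h1 | h1 | h1
  · exact Or.inl ⟨n, by rw [mul_pow]; exact h1⟩
  · right; left
    rw [← Ideal.radical_idem I]
    exact ⟨n, by rw [mul_pow]; exact h1⟩
  · right; right
    rw [← Ideal.radical_idem I]
    exact ⟨n, by rw [mul_pow]; exact h1⟩

theorem stmt6 [Module.Finite R M] (hM : IsMultiplicationModule R M)
    (N : Submodule R M) (hN : Is2AbsorbingPrimary N) :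
    Is2AbsorbingSubmodule (mRad N) := by
  have hI := colon_2abs hM N hN
  have hmrad := mRad_eq hM N
  have hcolon := colon_mRad hM N
  constructor
  · intro h
    have h1 : (1 : R) ∈ (mRad N).colon ⊤ := by
      rw [Submodule.mem_colon]; intro x _; rw [h]; exact Submodule.mem_top
    rw [hcolon] at h1
    obtain ⟨n, hn⟩ := Ideal.mem_radical_iff.1 h1
    rw [one_pow] at hn
    apply hN.1
    rw [eq_top_iff]
    intro x _
    have := Submodule.mem_colon.1 hn x trivial
    rwa [one_smul] at this
  · intro a b m habm
    by_cases hab : a * b ∈ (N.colon ⊤).radical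
    · left; rw [hcolon]; exact hab
    right
    obtain ⟨K, hK⟩ := hM (Submodule.span R {m})
    have hk : ∀ k ∈ K, a * b * k ∈ (N.colon ⊤).radical := by
      intro k hkK
      rw [← hcolon, Submodule.mem_colon]
      intro x _
      have hkx : k • x ∈ Submodule.span R {m} := by
        rw [hK]; exact Submodule.smul_mem_smul hkK trivial
      obtain ⟨r, hr⟩ := Submodule.mem_span_singleton.1 hkx
      have : (a * b * k) • x = r • ((a * b) • m) := by
        rw [mul_smul, ← hr, smul_comm]
      rw [this]
      exact Submodule.smul_mem _ r habm
    have hcases : (∀ k ∈ K, a * k ∈ (N.colon ⊤).radical) ∨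
        (∀ k ∈ K, b * k ∈ (N.colon ⊤).radical) := by
      by_contra hcon
      push_neg at hcon
      obtain ⟨⟨k₁, hk₁K, hak₁⟩, ⟨k₂, hk₂K, hbk₂⟩⟩ := hcon
      have hbk₁ : b * k₁ ∈ (N.colon ⊤).radical :=
        ((rad_2abs hI (hk k₁ hk₁K)).resolve_left hab).resolve_left hak₁
      have hak₂ : a * k₂ ∈ (N.colon ⊤).radical := by
        rcases rad_2abs hI (hk k₂ hk₂K) with h | h | h
        · exact absurd h hab
        · exact h
        · exact absurd h hbk₂
      rcases rad_2abs hI (hk (k₁ + k₂) (K.add_mem hk₁K hk₂K)) with h | h | h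
      · exact hab h
      · rw [mul_add] at h
        exact hak₁ (by have := Ideal.sub_mem _ h hak₂; rwa [add_sub_cancel_right] at this)
      · rw [mul_add] at h
        exact hbk₂ (by have := Ideal.sub_mem _ h hbk₁; rwa [add_sub_cancel_left] at this)
    have main : ∀ c : R, (∀ k ∈ K, c * k ∈ (N.colon ⊤).radical) → c • m ∈ mRad N := by
      intro c hc
      rw [hmrad]
      have hmK : m ∈ K • (⊤ : Submodule R M) := by
        rw [← hK]; exact Submodule.mem_span_singleton_self m
      refine Submodule.smul_induction_on hmK (fun k hkK x _ => ?_) (fun x y hx hy => ?_)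
      · rw [smul_smul]
        exact Submodule.smul_mem_smul (hc k hkK) trivial
      · rw [smul_add]
        exact Submodule.add_mem _ hx hy
    rcases hcases with h | h
    · exact Or.inl (main a h)
    · exact Or.inr (main b h)
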